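/- Let E be a barrelled locally convex Hausdorff topological vector space over ℂ in which every bounded subset is relatively compact (i.e. E is a Montel space), and let T : E → E be a continuous linear operator. Then T is mean ergodic if and only if T is uniformly mean ergodic. -/

import Mathlib

open Filter Topology

/-- The `n`-th Cesàro mean of `T` applied to `x`: `(1/n) ∑_{m=1}^{n} Tᵐ x`. -/
noncomputable def cesaroMean {E : Type*} [AddCommGroup E] [Module ℂ E] [TopologicalSpace E]
    (T : E →L[ℂ] E) (n : ℕ) (x : E) : E :=
  (n : ℂ)⁻¹ • ∑ m ∈ Finset.Icc 1 n, (T ^ m) x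

/-- The `n`-th Cesàro mean as a continuous linear map. -/
noncomputable def cesaroCLM {E : Type*} [AddCommGroup E] [Module ℂ E] [TopologicalSpace E]
    [IsTopologicalAddGroup E] [ContinuousConstSMul ℂ E]
    (T : E →L[ℂ] E) (n : ℕ) : E →L[ℂ] E :=
  (n : ℂ)⁻¹ • ∑ m ∈ Finset.Icc 1 n, T ^ m

lemma cesaroCLM_apply {E : Type*} [AddCommGroup E] [Module ℂ E] [TopologicalSpace E]
    [IsTopologicalAddGroup E] [ContinuousConstSMul ℂ E]
    (T : E →L[ℂ] E) (n : ℕ) (x : E) : cesaroCLM T n x = cesaroMean T n x := by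
  simp [cesaroCLM, cesaroMean, ContinuousLinearMap.sum_apply]

/-- On a Montel space, an operator is mean ergodic if and only if it is uniformly
mean ergodic. -/
theorem stmt4 {E : Type*} [AddCommGroup E] [Module ℂ E] [Module ℝ E] [IsScalarTower ℝ ℂ E]
    [UniformSpace E] [IsUniformAddGroup E] [ContinuousSMul ℂ E]
    [LocallyConvexSpace ℝ E] [T2Space E]
    -- `E` is barrelled: every pointwise bounded family of continuous linear operators on `E`
    -- is equicontinuous (Banach–Steinhaus property)
    (hbarrelled : ∀ (ι : Type) (f : ι → E →L[ℂ] E),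
      (∀ x : E, Bornology.IsVonNBounded ℂ (Set.range fun i => f i x)) →
        Equicontinuous fun i => ⇑(f i))
    -- every bounded subset of `E` is relatively compact
    (hmontel : ∀ s : Set E, Bornology.IsVonNBounded ℂ s → IsCompact (closure s))
    (T : E →L[ℂ] E) :
    -- `T` is mean ergodic
    (∃ P : E →L[ℂ] E, ∀ x : E,
        Tendsto (fun n : ℕ => cesaroMean T (n + 1) x) atTop (𝓝 (P x))) ↔
      -- `T` is uniformly mean ergodic: the Cesàro means converge to `P` uniformly on every
      -- bounded subset of `E`
      (∃ P : E →L[ℂ] E, ∀ s : Set E, Bornology.IsVonNBounded ℂ s →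
        TendstoUniformlyOn (fun n : ℕ => cesaroMean T (n + 1)) (⇑P) atTop s) := by
  constructor
  · rintro ⟨P, hP⟩
    refine ⟨P, fun s hs => ?_⟩
    set F : ℕ → E →L[ℂ] E := fun n => cesaroCLM T (n + 1) with hF
    have hFapp : ∀ n x, F n x = cesaroMean T (n + 1) x := fun n x => cesaroCLM_apply T (n + 1) x
    have hPtw : ∀ x : E, Tendsto (fun n : ℕ => F n x) atTop (𝓝 (P x)) := by
      intro x
      simpa only [hFapp] using hP x
    -- pointwise boundedness
    have hbdd : ∀ x : E, Bornology.IsVonNBounded ℂ (Set.range fun n => F n x) := by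
      intro x
      have hc : IsCompact (insert (P x) (Set.range fun n => F n x)) :=
        (hPtw x).isCompact_insert_range
      exact (hc.totallyBounded.isVonNBounded ℂ).subset (Set.subset_insert _ _)
    have heq : Equicontinuous fun n => ⇑(F n) := hbarrelled ℕ F hbdd
    -- compactness of the closure
    have hK : IsCompact (closure s) := hmontel s hs
    haveI : CompactSpace (closure s) := isCompact_iff_compactSpace.mp hK
    -- restrict to the closure
    have heq' : Equicontinuous fun n => (closure s).restrict ⇑(F n) :=
      (equicontinuous_restrict_iff _).mpr ((heq.equicontinuousOn _))
    have hptw' : Tendsto (fun n => (closure s).restrict ⇑(F n)) atTop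
        (𝓝 ((closure s).restrict ⇑P)) := by
      rw [tendsto_pi_nhds]
      exact fun y => hPtw y
    have huf := (heq'.tendsto_uniformFun_iff_pi atTop ((closure s).restrict ⇑P)).mpr hptw'
    rw [UniformFun.tendsto_iff_tendstoUniformly] at huf
    have : TendstoUniformlyOn (fun n => ⇑(F n)) (⇑P) atTop (closure s) := by
      rw [tendstoUniformlyOn_iff_tendstoUniformly_comp_coe]
      exact huf
    have := this.mono subset_closure
    convert this using 2 with n
    funext x
    exact (hFapp n x).symm
  · rintro ⟨P, hP⟩
    refine ⟨P, fun x => ?_⟩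
    have := hP {x} (Bornology.isVonNBounded_singleton x)
    rwa [tendstoUniformlyOn_singleton_iff_tendsto] at this
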